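/- arXiv:2512.11380 — 4 statements merged into one kernel-verified Lean document; each statement's English description precedes it below -/
import Mathlib

section
/- Let Ω̃ and Ω be open subsets of ℂ, let φ : Ω̃ → Ω be a holomorphic bijection, let p > 2 and 1 ≤ q < p. Then for every continuously differentiable function f : Ω → ℝ, (∫_{Ω̃} ‖∇(f∘φ)(w)‖^q dA(w))^{1/q} ≤ (∫_{Ω̃} |φ'(w)|^{q(p-2)/(p-q)} dA(w))^{(p-q)/(pq)} · (∫_{Ω} ‖∇f(z)‖^p dA(z))^{1/p} (an inequality in [0,∞]). -/
open MeasureTheory Real Set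
open scoped ENNReal

private lemma det_complex_mul (c : ℂ) :
    (((1 : ℂ →L[ℂ] ℂ).smulRight c).restrictScalars ℝ).det = Complex.normSq c := by
  have h : ((((1 : ℂ →L[ℂ] ℂ).smulRight c).restrictScalars ℝ : ℂ →L[ℝ] ℂ) : ℂ →ₗ[ℝ] ℂ)
      = Algebra.lmul ℝ ℂ c := by
    apply LinearMap.ext
    intro z
    simp [mul_comm]
  rw [ContinuousLinearMap.det, h, ← Algebra.norm_apply, Algebra.norm_complex_apply]

theorem conformal_composition_gradient_estimate
    (Ω' Ω : Set ℂ) (hΩ'o : IsOpen Ω') (hΩo : IsOpen Ω)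
    (φ : ℂ → ℂ) (φ' : ℂ → ℂ)
    (hholo : ∀ w ∈ Ω', HasDerivAt φ (φ' w) w)
    (hbij : Set.BijOn φ Ω' Ω)
    (p q : ℝ) (hp : 2 < p) (hq1 : 1 ≤ q) (hqp : q < p)
    (f : ℂ → ℝ) (hf : ContDiffOn ℝ 1 f Ω) :
    (∫⁻ w in Ω', (‖fderiv ℝ (f ∘ φ) w‖₊ : ℝ≥0∞) ^ q) ^ (1 / q)
      ≤ (∫⁻ w in Ω', (‖φ' w‖₊ : ℝ≥0∞) ^ (q * (p - 2) / (p - q))) ^ ((p - q) / (p * q))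
        * (∫⁻ z in Ω, (‖fderiv ℝ f z‖₊ : ℝ≥0∞) ^ p) ^ (1 / p) := by
  have hq0 : (0:ℝ) < q := lt_of_lt_of_le one_pos hq1
  have hp0 : (0:ℝ) < p := lt_trans (by norm_num) hp
  have hpq0 : (0:ℝ) < p - q := sub_pos.2 hqp
  have hΩ'm : MeasurableSet Ω' := hΩ'o.measurableSet
  set μ := volume.restrict Ω' with hμ
  -- notation
  set F : ℂ → ℝ≥0∞ := fun z => (‖fderiv ℝ f z‖₊ : ℝ≥0∞) with hF
  set Φ : ℂ → ℝ≥0∞ := fun w => (‖φ' w‖₊ : ℝ≥0∞) with hΦdef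
  -- measurability
  have hφc : ContinuousOn φ Ω' := fun w hw => (hholo w hw).continuousAt.continuousWithinAt
  have hφm : AEMeasurable φ μ := hφc.aemeasurable hΩ'm
  have hG : AEMeasurable (fun w => F (φ w)) μ :=
    ((measurable_fderiv ℝ f).comp_aemeasurable hφm).enorm
  have hΦ : AEMeasurable Φ μ := by
    have h1 : ∀ᵐ w ∂μ, deriv φ w = φ' w := by
      rw [hμ, ae_restrict_iff' hΩ'm]
      exact Filter.Eventually.of_forall fun w hw => (hholo w hw).deriv
    exact ((measurable_deriv φ).aemeasurable.congr h1).enorm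
  -- pointwise bound on the derivative of the composition
  have hpt : ∀ w ∈ Ω', (‖fderiv ℝ (f ∘ φ) w‖₊ : ℝ≥0∞) ≤ F (φ w) * Φ w := by
    intro w hw
    have hφw : HasFDerivAt φ (((1 : ℂ →L[ℂ] ℂ).smulRight (φ' w)).restrictScalars ℝ) w :=
      ((hholo w hw).hasFDerivAt).restrictScalars ℝ
    have hmem : φ w ∈ Ω := hbij.mapsTo hw
    have hfd : HasFDerivAt f (fderiv ℝ f (φ w)) (φ w) := by
      have h1 : ContDiffAt ℝ 1 f (φ w) := hf.contDiffAt (hΩo.mem_nhds hmem)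
      exact (h1.differentiableAt one_ne_zero).hasFDerivAt
    have hcomp := hfd.comp w hφw
    rw [hcomp.fderiv]
    have hb : ‖(fderiv ℝ f (φ w)).comp (((1 : ℂ →L[ℂ] ℂ).smulRight (φ' w)).restrictScalars ℝ)‖₊
        ≤ ‖fderiv ℝ f (φ w)‖₊ * ‖φ' w‖₊ := by
      refine le_trans (ContinuousLinearMap.opNNNorm_comp_le _ _) ?_
      have : ‖((1 : ℂ →L[ℂ] ℂ).smulRight (φ' w)).restrictScalars ℝ‖₊ = ‖φ' w‖₊ := by
        ext
        rw [coe_nnnorm, coe_nnnorm, ContinuousLinearMap.norm_restrictScalars,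
          ContinuousLinearMap.norm_smulRight_apply]
        simp
      rw [this]
    simpa [hF, hΦdef, ENNReal.coe_mul] using ENNReal.coe_le_coe.2 hb
  -- step 1 : monotonicity
  have step1 : (∫⁻ w in Ω', (‖fderiv ℝ (f ∘ φ) w‖₊ : ℝ≥0∞) ^ q)
      ≤ ∫⁻ w in Ω', (F (φ w) * Φ w) ^ q := by
    refine lintegral_mono_ae ?_
    rw [ae_restrict_iff' hΩ'm]
    exact Filter.Eventually.of_forall fun w hw =>
      ENNReal.rpow_le_rpow (hpt w hw) (le_of_lt hq0)
  -- step 2 : split the power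
  have hexp : 2 * q / p + q * (p - 2) / p = q := by field_simp; ring
  have step2 : (∫⁻ w in Ω', (F (φ w) * Φ w) ^ q)
      = ∫⁻ w in Ω', (F (φ w) ^ q * Φ w ^ (2 * q / p)) * Φ w ^ (q * (p - 2) / p) := by
    refine lintegral_congr fun w => ?_
    rw [ENNReal.mul_rpow_of_nonneg _ _ (le_of_lt hq0), mul_assoc]
    congr 1
    rw [← ENNReal.rpow_add_of_nonneg _ _ (by positivity)
      (div_nonneg (mul_nonneg hq0.le (by linarith)) hp0.le), hexp]
  -- step 3 : Hölder
  have hconj : (p / q).HolderConjugate (p / (p - q)) := by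
    rw [Real.holderConjugate_iff]
    constructor
    · rw [lt_div_iff₀ hq0, one_mul]; exact hqp
    · rw [inv_div, inv_div]; field_simp; ring
  have hu : AEMeasurable (fun w => F (φ w) ^ q * Φ w ^ (2 * q / p)) μ :=
    (ENNReal.continuous_rpow_const.measurable.comp_aemeasurable hG).mul
      (ENNReal.continuous_rpow_const.measurable.comp_aemeasurable hΦ)
  have hv : AEMeasurable (fun w => Φ w ^ (q * (p - 2) / p)) μ :=
    ENNReal.continuous_rpow_const.measurable.comp_aemeasurable hΦ
  have step3 := ENNReal.lintegral_mul_le_Lp_mul_Lq μ hconj hu hv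
  -- simplify the two factors on the right of Hölder
  have e1 : (∫⁻ w, (F (φ w) ^ q * Φ w ^ (2 * q / p)) ^ (p / q) ∂μ)
      = ∫⁻ w in Ω', F (φ w) ^ p * Φ w ^ (2:ℝ) := by
    refine lintegral_congr fun w => ?_
    rw [ENNReal.mul_rpow_of_nonneg _ _ (by positivity), ← ENNReal.rpow_mul, ← ENNReal.rpow_mul]
    congr 2 <;> field_simp
  have e2 : (∫⁻ w, (Φ w ^ (q * (p - 2) / p)) ^ (p / (p - q)) ∂μ)
      = ∫⁻ w in Ω', Φ w ^ (q * (p - 2) / (p - q)) := by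
    refine lintegral_congr fun w => ?_
    rw [← ENNReal.rpow_mul]
    congr 1
    field_simp
  -- change of variables
  have hCoV : (∫⁻ w in Ω', F (φ w) ^ p * Φ w ^ (2:ℝ)) = ∫⁻ z in Ω, F z ^ p := by
    have h := lintegral_image_eq_lintegral_abs_det_fderiv_mul volume hΩ'm
      (fun w hw => (((hholo w hw).hasFDerivAt).restrictScalars ℝ).hasFDerivWithinAt)
      hbij.injOn (fun z => F z ^ p)
    rw [hbij.image_eq] at h
    rw [h]
    refine lintegral_congr fun w => ?_
    rw [show ((ContinuousLinearMap.toSpanSingleton ℂ (φ' w)).restrictScalars ℝ : ℂ →L[ℝ] ℂ)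
        = ((1 : ℂ →L[ℂ] ℂ).smulRight (φ' w)).restrictScalars ℝ from
        ContinuousLinearMap.ext fun z => by simp,
      det_complex_mul, abs_of_nonneg (Complex.normSq_nonneg _), mul_comm]
    congr 1
    have h2 : Complex.normSq (φ' w) = ‖φ' w‖ * ‖φ' w‖ := by
      rw [Complex.normSq_eq_norm_sq, pow_two]
    rw [h2, ENNReal.ofReal_mul (norm_nonneg _), ofReal_norm,
      show (2:ℝ) = ((2:ℕ):ℝ) by norm_num, ENNReal.rpow_natCast, sq]
    rfl
  -- combine
  set A := ∫⁻ z in Ω, F z ^ p with hA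
  set B := ∫⁻ w in Ω', Φ w ^ (q * (p - 2) / (p - q)) with hB
  have key : (∫⁻ w in Ω', (‖fderiv ℝ (f ∘ φ) w‖₊ : ℝ≥0∞) ^ q)
      ≤ A ^ (q / p) * B ^ ((p - q) / p) := by
    refine le_trans step1 ?_
    rw [step2]
    refine le_trans step3 ?_
    rw [e1, e2, hCoV, one_div_div, one_div_div]
  calc (∫⁻ w in Ω', (‖fderiv ℝ (f ∘ φ) w‖₊ : ℝ≥0∞) ^ q) ^ (1 / q)
      ≤ (A ^ (q / p) * B ^ ((p - q) / p)) ^ (1 / q) :=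
        ENNReal.rpow_le_rpow key (by positivity)
    _ = B ^ ((p - q) / (p * q)) * A ^ (1 / p) := by
        rw [ENNReal.mul_rpow_of_nonneg _ _ (by positivity), ← ENNReal.rpow_mul,
          ← ENNReal.rpow_mul, mul_comm]
        congr 2 <;> field_simp <;> ring
end

section
/- Let Ω̃ and Ω be simply connected open subsets of ℂ with finite two-dimensional Lebesgue measure and let φ : Ω̃ → Ω be a holomorphic bijection. Then for every p > 2, every q with 1 ≤ q ≤ 2, and every continuously differentiable function f : Ω → ℝ, (∫_{Ω̃} ‖∇(f∘φ)(w)‖^q dA(w))^{1/q} ≤ |Ω|^{(p-2)/(2p)} · |Ω̃|^{(2-q)/(2q)} · (∫_{Ω} ‖∇f(z)‖^p dA(z))^{1/p} (an inequality in [0,∞]). -/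
open MeasureTheory Real Set
open scoped ENNReal

lemma det_mul_complex (c : ℂ) :
    (((1 : ℂ →L[ℂ] ℂ).smulRight c).restrictScalars ℝ : ℂ →L[ℝ] ℂ).det = Complex.normSq c := by
  have : (((1 : ℂ →L[ℂ] ℂ).smulRight c).restrictScalars ℝ : ℂ →ₗ[ℝ] ℂ)
      = Algebra.lmul ℝ ℂ c := by
    ext z
    simp [mul_comm]
  rw [ContinuousLinearMap.det, this]
  rw [← Algebra.norm_apply, Algebra.norm_complex_apply]

lemma ofReal_normSq_eq (c : ℂ) :
    ENNReal.ofReal (Complex.normSq c) = (‖c‖₊ : ℝ≥0∞) ^ (2 : ℝ) := by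
  rw [Complex.normSq_eq_norm_sq, sq,
    ENNReal.ofReal_mul (norm_nonneg c), ofReal_norm, enorm_eq_nnnorm]
  rw [show ((2:ℝ)) = ((2:ℕ):ℝ) by norm_num, ENNReal.rpow_natCast, sq]

theorem conformal_composition_operator_bound
    (Ω' Ω : Set ℂ) (hΩ'o : IsOpen Ω') (hΩo : IsOpen Ω)
    (hΩ'sc : SimplyConnectedSpace ↥Ω') (hΩsc : SimplyConnectedSpace ↥Ω)
    (hΩ'fin : volume Ω' < ⊤) (hΩfin : volume Ω < ⊤)
    (φ : ℂ → ℂ) (φ' : ℂ → ℂ)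
    (hholo : ∀ w ∈ Ω', HasDerivAt φ (φ' w) w)
    (hbij : Set.BijOn φ Ω' Ω)
    (p q : ℝ) (hp : 2 < p) (hq1 : 1 ≤ q) (hq2 : q ≤ 2)
    (f : ℂ → ℝ) (hf : ContDiffOn ℝ 1 f Ω) :
    (∫⁻ w in Ω', (‖fderiv ℝ (f ∘ φ) w‖₊ : ℝ≥0∞) ^ q) ^ (1 / q)
      ≤ volume Ω ^ ((p - 2) / (2 * p)) * volume Ω' ^ ((2 - q) / (2 * q))
        * (∫⁻ z in Ω, (‖fderiv ℝ f z‖₊ : ℝ≥0∞) ^ p) ^ (1 / p) := by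
  have hq0 : (0:ℝ) < q := lt_of_lt_of_le one_pos hq1
  have hp0 : (0:ℝ) < p := lt_trans two_pos hp
  set F' : ℂ → ℂ →L[ℝ] ℂ := fun w => ((1 : ℂ →L[ℂ] ℂ).smulRight (φ' w)).restrictScalars ℝ
    with hF'def
  have hnormF' : ∀ w, ‖F' w‖ = ‖φ' w‖ := by
    intro w
    rw [hF'def]
    rw [ContinuousLinearMap.norm_restrictScalars, ContinuousLinearMap.norm_smulRight_apply]
    simp
  have hφF : ∀ w ∈ Ω', HasFDerivAt φ (F' w) w := fun w hw =>
    ((hholo w hw).hasFDerivAt).restrictScalars ℝ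
  have hfd : ∀ z ∈ Ω, DifferentiableAt ℝ f z := fun z hz =>
    ((hf.differentiableOn one_ne_zero) z hz).differentiableAt (hΩo.mem_nhds hz)
  set h : ℂ → ℝ := fun w => ‖fderiv ℝ f (φ w)‖ * ‖φ' w‖ with hhdef
  have hnnh : ∀ w, (‖h w‖₊ : ℝ≥0∞) = (‖fderiv ℝ f (φ w)‖₊ : ℝ≥0∞) * (‖φ' w‖₊ : ℝ≥0∞) := by
    intro w
    have : ‖h w‖₊ = ‖fderiv ℝ f (φ w)‖₊ * ‖φ' w‖₊ := by
      simp only [hhdef, nnnorm_mul, nnnorm_norm]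
    rw [this, ENNReal.coe_mul]
  -- Step A: pointwise chain rule bound
  have stepA : ∫⁻ w in Ω', (‖fderiv ℝ (f ∘ φ) w‖₊ : ℝ≥0∞) ^ q
      ≤ ∫⁻ w in Ω', (‖h w‖₊ : ℝ≥0∞) ^ q := by
    apply setLIntegral_mono' hΩ'o.measurableSet
    intro w hw
    have hcomp : HasFDerivAt (f ∘ φ) ((fderiv ℝ f (φ w)).comp (F' w)) w :=
      ((hfd _ (hbij.mapsTo hw)).hasFDerivAt).comp w (hφF w hw)
    have hle : ‖fderiv ℝ (f ∘ φ) w‖ ≤ ‖h w‖ := by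
      rw [hcomp.fderiv]
      have : ‖h w‖ = h w := by
        rw [Real.norm_eq_abs, abs_of_nonneg (mul_nonneg (norm_nonneg _) (norm_nonneg _))]
      rw [this, hhdef]
      calc ‖(fderiv ℝ f (φ w)).comp (F' w)‖ ≤ ‖fderiv ℝ f (φ w)‖ * ‖F' w‖ :=
            ContinuousLinearMap.opNorm_comp_le _ _
        _ = ‖fderiv ℝ f (φ w)‖ * ‖φ' w‖ := by rw [hnormF']
    exact ENNReal.rpow_le_rpow (by exact_mod_cast hle) hq0.le
  -- measurability
  have hφcont : ContinuousOn φ Ω' := fun w hw =>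
    ((hholo w hw).differentiableAt.continuousAt).continuousWithinAt
  have hφae : AEMeasurable φ (volume.restrict Ω') :=
    hφcont.aemeasurable hΩ'o.measurableSet
  have h1 : AEMeasurable (fun w => ‖fderiv ℝ f (φ w)‖) (volume.restrict Ω') :=
    ((measurable_fderiv ℝ f).comp_aemeasurable hφae).norm
  have hφ'ae : AEMeasurable φ' (volume.restrict Ω') := by
    refine (measurable_deriv φ).aemeasurable.congr ?_
    filter_upwards [ae_restrict_mem hΩ'o.measurableSet] with w hw
    exact (hholo w hw).deriv
  have hAESMh : AEStronglyMeasurable h (volume.restrict Ω') :=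
    (h1.mul hφ'ae.norm).aestronglyMeasurable
  -- Step B : Hölder on Ω'
  have stepB := eLpNorm'_le_eLpNorm'_mul_rpow_measure_univ hq0 hq2 hAESMh
  rw [Measure.restrict_apply_univ] at stepB
  -- Step C : change of variables
  have stepC : ∫⁻ w in Ω', (‖h w‖₊ : ℝ≥0∞) ^ (2:ℝ)
      = ∫⁻ z in Ω, (‖fderiv ℝ f z‖₊ : ℝ≥0∞) ^ (2:ℝ) := by
    have key := lintegral_image_eq_lintegral_abs_det_fderiv_mul volume hΩ'o.measurableSet
      (fun w hw => (hφF w hw).hasFDerivWithinAt) hbij.injOn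
      (fun z => (‖fderiv ℝ f z‖₊ : ℝ≥0∞) ^ (2:ℝ))
    rw [hbij.image_eq] at key
    rw [key]
    apply setLIntegral_congr_fun hΩ'o.measurableSet
    intro w hw
    beta_reduce
    rw [hF'def, det_mul_complex, abs_of_nonneg (Complex.normSq_nonneg _), ofReal_normSq_eq,
      hnnh, ENNReal.mul_rpow_of_nonneg _ _ (by norm_num : (0:ℝ) ≤ 2), mul_comm]
  -- Step D : Hölder on Ω
  have hAESMg : AEStronglyMeasurable (fun z => ‖fderiv ℝ f z‖) (volume.restrict Ω) :=
    ((measurable_fderiv ℝ f).norm).aestronglyMeasurable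
  have stepD := eLpNorm'_le_eLpNorm'_mul_rpow_measure_univ two_pos hp.le hAESMg
  rw [Measure.restrict_apply_univ] at stepD
  -- assemble
  simp only [eLpNorm'] at stepB stepD
  simp only [enorm_norm, enorm_eq_nnnorm, nnnorm_norm] at stepD
  calc (∫⁻ w in Ω', (‖fderiv ℝ (f ∘ φ) w‖₊ : ℝ≥0∞) ^ q) ^ (1 / q)
      ≤ (∫⁻ w in Ω', (‖h w‖₊ : ℝ≥0∞) ^ q) ^ (1 / q) :=
        ENNReal.rpow_le_rpow stepA (by positivity)
    _ ≤ (∫⁻ w in Ω', (‖h w‖₊ : ℝ≥0∞) ^ (2:ℝ)) ^ (1 / (2:ℝ)) * volume Ω' ^ (1 / q - 1 / 2) :=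
        stepB
    _ = (∫⁻ z in Ω, (‖fderiv ℝ f z‖₊ : ℝ≥0∞) ^ (2:ℝ)) ^ (1 / (2:ℝ))
          * volume Ω' ^ (1 / q - 1 / 2) := by rw [stepC]
    _ ≤ ((∫⁻ z in Ω, (‖fderiv ℝ f z‖₊ : ℝ≥0∞) ^ p) ^ (1 / p) * volume Ω ^ (1 / 2 - 1 / p))
          * volume Ω' ^ (1 / q - 1 / 2) := by gcongr
    _ = volume Ω ^ ((p - 2) / (2 * p)) * volume Ω' ^ ((2 - q) / (2 * q))
          * (∫⁻ z in Ω, (‖fderiv ℝ f z‖₊ : ℝ≥0∞) ^ p) ^ (1 / p) := by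
        rw [show 1 / 2 - 1 / p = (p - 2) / (2 * p) by
            rw [div_sub_div _ _ two_ne_zero hp0.ne']; ring_nf,
          show 1 / q - 1 / 2 = (2 - q) / (2 * q) by
            rw [div_sub_div _ _ hq0.ne' two_ne_zero, mul_comm]; ring_nf]
        ring
end

section
/- Let Ω̃ and Ω be open subsets of ℝ², let φ : Ω̃ → Ω be a C¹-diffeomorphism whose Jacobian determinant J(w,φ) = det Dφ(w) is nowhere zero, and let 1 ≤ q < p < ∞. Set K_{p,q} = (∫_{Ω̃} (‖Dφ(w)‖^p / |J(w,φ)|)^{q/(p-q)} dA(w))^{(p-q)/(pq)}, where ‖Dφ(w)‖ is the operator norm of the differential. If K_{p,q} < ∞, then for every continuously differentiable function f : Ω → ℝ one has (∫_{Ω̃} ‖∇(f∘φ)(w)‖^q dA(w))^{1/q} ≤ K_{p,q} · (∫_{Ω} ‖∇f(x)‖^p dA(x))^{1/p} (an inequality in [0,∞]). -/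
open MeasureTheory Real Set
open scoped ENNReal

theorem diffeomorphism_composition_operator_bound
    (Ω' Ω : Set (EuclideanSpace ℝ (Fin 2))) (hΩ'o : IsOpen Ω') (hΩo : IsOpen Ω)
    (φ ψ : EuclideanSpace ℝ (Fin 2) → EuclideanSpace ℝ (Fin 2))
    (hbij : Set.BijOn φ Ω' Ω)
    (hφ : ContDiffOn ℝ 1 φ Ω') (hψ : ContDiffOn ℝ 1 ψ Ω)
    (hinv : Set.InvOn ψ φ Ω' Ω)
    (hJ : ∀ w ∈ Ω', (fderiv ℝ φ w).det ≠ 0)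
    (p q : ℝ) (hq1 : 1 ≤ q) (hqp : q < p)
    (K : ℝ≥0∞)
    (hK : K = (∫⁻ w in Ω',
        ((‖fderiv ℝ φ w‖₊ : ℝ≥0∞) ^ p / ENNReal.ofReal |(fderiv ℝ φ w).det|)
          ^ (q / (p - q))) ^ ((p - q) / (p * q)))
    (hKfin : K < ⊤)
    (f : EuclideanSpace ℝ (Fin 2) → ℝ) (hf : ContDiffOn ℝ 1 f Ω) :
    (∫⁻ w in Ω', (‖fderiv ℝ (f ∘ φ) w‖₊ : ℝ≥0∞) ^ q) ^ (1 / q)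
      ≤ K * (∫⁻ x in Ω, (‖fderiv ℝ f x‖₊ : ℝ≥0∞) ^ p) ^ (1 / p) := by
  have hq0 : (0:ℝ) < q := lt_of_lt_of_le one_pos hq1
  have hp0 : (0:ℝ) < p := hq0.trans hqp
  have hpq0 : (0:ℝ) < p - q := sub_pos.2 hqp
  set g : EuclideanSpace ℝ (Fin 2) → ℝ≥0∞ :=
    fun w => (‖fderiv ℝ f (φ w)‖₊ : ℝ≥0∞) with hgdef
  set h : EuclideanSpace ℝ (Fin 2) → ℝ≥0∞ :=
    fun w => (‖fderiv ℝ φ w‖₊ : ℝ≥0∞) with hhdef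
  set J : EuclideanSpace ℝ (Fin 2) → ℝ≥0∞ :=
    fun w => ENNReal.ofReal |(fderiv ℝ φ w).det| with hJdef
  set F : EuclideanSpace ℝ (Fin 2) → ℝ≥0∞ :=
    fun w => g w ^ q * J w ^ (q / p) with hFdef
  set G : EuclideanSpace ℝ (Fin 2) → ℝ≥0∞ :=
    fun w => h w ^ q / J w ^ (q / p) with hGdef
  have hmeasΩ' : MeasurableSet Ω' := hΩ'o.measurableSet
  -- differentiability of φ on Ω' and f on Ω
  have hdφ : ∀ w ∈ Ω', DifferentiableAt ℝ φ w := fun w hw =>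
    (hφ.contDiffAt (hΩ'o.mem_nhds hw)).differentiableAt one_ne_zero
  have hdf : ∀ x ∈ Ω, DifferentiableAt ℝ f x := fun x hx =>
    (hf.contDiffAt (hΩo.mem_nhds hx)).differentiableAt one_ne_zero
  -- measurability facts
  have hch : ContinuousOn h Ω' := by
    have := hφ.continuousOn_fderiv_of_isOpen hΩ'o le_rfl
    exact (ENNReal.continuous_coe.comp continuous_nnnorm).comp_continuousOn this
  have hcJ : ContinuousOn J Ω' := by
    have := hφ.continuousOn_fderiv_of_isOpen hΩ'o le_rfl
    exact (ENNReal.continuous_ofReal.comp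
      (continuous_abs.comp ContinuousLinearMap.continuous_det)).comp_continuousOn this
  have hcg : ContinuousOn g Ω' := by
    have h1 : ContinuousOn (fderiv ℝ f) Ω := hf.continuousOn_fderiv_of_isOpen hΩo le_rfl
    have h2 : ContinuousOn (fun w => fderiv ℝ f (φ w)) Ω' :=
      h1.comp hφ.continuousOn hbij.mapsTo
    exact (ENNReal.continuous_coe.comp continuous_nnnorm).comp_continuousOn h2
  have hmh : AEMeasurable h (volume.restrict Ω') := hch.aemeasurable hmeasΩ'
  have hmJ : AEMeasurable J (volume.restrict Ω') := hcJ.aemeasurable hmeasΩ'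
  have hmg : AEMeasurable g (volume.restrict Ω') := hcg.aemeasurable hmeasΩ'
  have hmF : AEMeasurable F (volume.restrict Ω') :=
    (hmg.pow_const q).mul (hmJ.pow_const (q / p))
  have hmG : AEMeasurable G (volume.restrict Ω') :=
    (hmh.pow_const q).div (hmJ.pow_const (q / p))
  -- Step 1 : pointwise bound
  have step1 : (∫⁻ w in Ω', (‖fderiv ℝ (f ∘ φ) w‖₊ : ℝ≥0∞) ^ q)
      ≤ ∫⁻ w in Ω', (F * G) w := by
    refine lintegral_mono_ae ((ae_restrict_iff' hmeasΩ').2 (ae_of_all _ fun w hw => ?_))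
    have hdφw := hdφ w hw
    have hdfw := hdf (φ w) (hbij.mapsTo hw)
    have hcomp : fderiv ℝ (f ∘ φ) w = (fderiv ℝ f (φ w)).comp (fderiv ℝ φ w) :=
      fderiv_comp w hdfw hdφw
    have hbound : (‖fderiv ℝ (f ∘ φ) w‖₊ : ℝ≥0∞) ≤ g w * h w := by
      rw [hcomp]
      simp only [hgdef, hhdef, ← ENNReal.coe_mul, ENNReal.coe_le_coe]
      exact ContinuousLinearMap.opNNNorm_comp_le _ _
    have hJ0 : J w ≠ 0 := by
      simp only [hJdef, ne_eq, ENNReal.ofReal_eq_zero, not_le]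
      exact abs_pos.2 (hJ w hw)
    have ha0 : J w ^ (q / p) ≠ 0 := by
      exact (ENNReal.rpow_pos (pos_iff_ne_zero.2 hJ0) ENNReal.ofReal_ne_top).ne'
    have hatop : J w ^ (q / p) ≠ ⊤ :=
      ENNReal.rpow_ne_top_of_nonneg (by positivity) ENNReal.ofReal_ne_top
    have hFG : (F * G) w = (g w * h w) ^ q := by
      simp only [Pi.mul_apply, hFdef, hGdef]
      rw [mul_assoc, ENNReal.mul_div_cancel' (fun h => absurd h ha0) (fun h => absurd h hatop),
        ENNReal.mul_rpow_of_nonneg _ _ hq0.le]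
    rw [hFG]
    exact ENNReal.rpow_le_rpow hbound hq0.le
  -- Hölder
  have hconj : Real.HolderConjugate (p / q) (p / (p - q)) := by
    rw [Real.holderConjugate_iff]
    constructor
    · rw [lt_div_iff₀ hq0]; linarith
    · rw [inv_div, inv_div]; field_simp; ring
  have holder := ENNReal.lintegral_mul_le_Lp_mul_Lq (volume.restrict Ω') hconj hmF hmG
  -- identify the two Hölder factors
  have hFpow : ∀ w, F w ^ (p / q) = J w * g w ^ p := by
    intro w
    simp only [hFdef]
    rw [ENNReal.mul_rpow_of_nonneg _ _ (by positivity), ← ENNReal.rpow_mul,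
      ← ENNReal.rpow_mul]
    rw [show q * (p / q) = p by field_simp, show q / p * (p / q) = 1 by field_simp]
    rw [ENNReal.rpow_one, mul_comm]
  have hGpow : ∀ w, G w ^ (p / (p - q))
      = (h w ^ p / J w) ^ (q / (p - q)) := by
    intro w
    simp only [hGdef]
    rw [ENNReal.div_rpow_of_nonneg _ _ (by positivity),
      ENNReal.div_rpow_of_nonneg _ _ (by positivity), ← ENNReal.rpow_mul,
      ← ENNReal.rpow_mul, ← ENNReal.rpow_mul]
    rw [show q * (p / (p - q)) = p * (q / (p - q)) by field_simp,
      show q / p * (p / (p - q)) = q / (p - q) by field_simp]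
  -- change of variables
  have hcov : (∫⁻ x in Ω, (‖fderiv ℝ f x‖₊ : ℝ≥0∞) ^ p)
      = ∫⁻ w in Ω', F w ^ (p / q) := by
    have hder : ∀ x ∈ Ω', HasFDerivWithinAt φ (fderiv ℝ φ x) Ω' x := fun x hx =>
      (hdφ x hx).hasFDerivAt.hasFDerivWithinAt
    rw [← hbij.image_eq,
      lintegral_image_eq_lintegral_abs_det_fderiv_mul volume hmeasΩ' hder hbij.injOn
        (fun x => (‖fderiv ℝ f x‖₊ : ℝ≥0∞) ^ p)]
    exact lintegral_congr fun w => (hFpow w).symm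
  -- put everything together
  have hKq : K = (∫⁻ w in Ω', G w ^ (p / (p - q))) ^ ((p - q) / (p * q)) := by
    rw [hK]
    congr 1
    exact lintegral_congr fun w => (hGpow w).symm
  calc (∫⁻ w in Ω', (‖fderiv ℝ (f ∘ φ) w‖₊ : ℝ≥0∞) ^ q) ^ (1 / q)
      ≤ (∫⁻ w in Ω', (F * G) w) ^ (1 / q) :=
        ENNReal.rpow_le_rpow step1 (by positivity)
    _ ≤ ((∫⁻ w in Ω', F w ^ (p / q)) ^ (1 / (p / q))
          * (∫⁻ w in Ω', G w ^ (p / (p - q))) ^ (1 / (p / (p - q)))) ^ (1 / q) :=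
        ENNReal.rpow_le_rpow holder (by positivity)
    _ = (∫⁻ w in Ω', F w ^ (p / q)) ^ (1 / p)
          * (∫⁻ w in Ω', G w ^ (p / (p - q))) ^ ((p - q) / (p * q)) := by
        rw [ENNReal.mul_rpow_of_nonneg _ _ (by positivity), ← ENNReal.rpow_mul,
          ← ENNReal.rpow_mul]
        rw [show 1 / (p / q) * (1 / q) = 1 / p by field_simp; try ring,
          show 1 / (p / (p - q)) * (1 / q) = (p - q) / (p * q) by field_simp; try ring]
    _ = K * (∫⁻ x in Ω, (‖fderiv ℝ f x‖₊ : ℝ≥0∞) ^ p) ^ (1 / p) := by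
        rw [hcov, hKq, mul_comm]
end

section
/- For every natural number n ≥ 1, the map φ(z) = z + zⁿ/n is injective on the open unit disc 𝔻 = {z ∈ ℂ : |z| < 1}. -/
open Set

theorem epicycloid_map_injective (n : ℕ) (hn : 1 ≤ n) :
    Set.InjOn (fun z : ℂ => z + z ^ n / n) (Metric.ball (0 : ℂ) 1) := by
  rcases eq_or_lt_of_le hn with h1 | h2
  · intro a _ b _ hab
    simp only [← h1] at hab
    simp only [pow_one, Nat.cast_one, div_one] at hab
    linear_combination hab / 2
  intro a ha b hb hab
  simp only [Metric.mem_ball, dist_zero_right] at ha hb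
  simp only at hab
  have hn0 : (n : ℂ) ≠ 0 := Nat.cast_ne_zero.mpr (by omega)
  by_contra hne
  have key : (∑ i ∈ Finset.range n, a ^ i * b ^ (n - 1 - i)) * (a - b) = a ^ n - b ^ n :=
    geom_sum₂_mul a b n
  -- from hab : a + a^n/n = b + b^n/n
  have h2' : (a - b) * ((n : ℂ) + ∑ i ∈ Finset.range n, a ^ i * b ^ (n - 1 - i)) = 0 := by
    have : (a - b) * (n : ℂ) + (a ^ n - b ^ n) = 0 := by
      field_simp at hab
      linear_combination hab
    linear_combination this + key
  rcases mul_eq_zero.mp h2' with h | h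
  · exact hne (sub_eq_zero.mp h)
  · -- |∑| ≤ n * max < n since each term has norm < 1 (n ≥ 2)
    have hS : ‖∑ i ∈ Finset.range n, a ^ i * b ^ (n - 1 - i)‖ < n := by
      calc ‖∑ i ∈ Finset.range n, a ^ i * b ^ (n - 1 - i)‖
          ≤ ∑ i ∈ Finset.range n, ‖a ^ i * b ^ (n - 1 - i)‖ := norm_sum_le _ _
        _ < ∑ _i ∈ Finset.range n, (1 : ℝ) := by
            apply Finset.sum_lt_sum_of_nonempty
            · exact Finset.nonempty_range_iff.mpr (by omega)
            · intro i hi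
              rw [norm_mul, norm_pow, norm_pow]
              have hi' : i < n := Finset.mem_range.mp hi
              have h1 : ‖a‖ ^ i ≤ 1 := pow_le_one₀ (norm_nonneg a) ha.le
              have h2'' : ‖b‖ ^ (n - 1 - i) ≤ 1 := pow_le_one₀ (norm_nonneg b) hb.le
              rcases Nat.eq_zero_or_pos i with rfl | hip
              · simp only [pow_zero, one_mul]
                exact pow_lt_one₀ (norm_nonneg b) hb (by omega)
              · have : ‖a‖ ^ i < 1 := pow_lt_one₀ (norm_nonneg a) ha (by omega)
                nlinarith [pow_nonneg (norm_nonneg a) i, pow_nonneg (norm_nonneg b) (n-1-i)]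
        _ = n := by simp
    have : (n : ℂ) = -(∑ i ∈ Finset.range n, a ^ i * b ^ (n - 1 - i)) :=
      eq_neg_of_add_eq_zero_left h
    have := congrArg norm this
    rw [norm_neg] at this
    simp only [Complex.norm_natCast] at this
    linarith
end
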